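/- Deployment produces no inter-firewall shadowing or misconnection: under the deployment strategy of Algorithm 5 applied to a rule set R whose rules have pairwise disjoint match sets (as guaranteed by policy-rewriting), if a firewall f on MR(z1, z2) holds a deployed prohibition matching a packet from z1 to z2, then no firewall on MR(z1, z2) downstream of f holds a deployed permission matching the same packet, and f is the first firewall of MR(z1, z2). -/

import Mathlib

/-- A filtering rule: a match set over a packet space together with a
decision (`true` = accept, `false` = deny). -/
structure FwRule (P : Type*) where
  mtch : Set P
  dec : Bool

/-- The restriction `r'` of a rule `r` to source zone `z1` and destination
zone `z2`: it matches exactly the packets of `r` from `z1` to `z2`. -/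
def restrictRule {Z P : Type*} (src dst : P → Z) (r : FwRule P) (z1 z2 : Z) :
    FwRule P :=
  ⟨r.mtch ∩ {p | src p = z1 ∧ dst p = z2}, r.dec⟩

/-- under Algorithm 5's deployment of a rule set `R` with
pairwise disjoint match sets (accept rules replicated on every firewall of the
minimal route, deny rules placed only on its first firewall), if a firewall
`f` on `MR z1 z2` holds a deployed prohibition matching a packet from `z1` to
`z2`, then `f` is the first firewall of `MR z1 z2` and no downstream firewall
on `MR z1 z2` holds a deployed permission matching the same packet. -/
theorem deployment_no_shadowing_no_misconnection {F Z P : Type*}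
    (src dst : P → Z) (MR : Z → Z → List F)
    (R : List (FwRule P))
    (hdisj : R.Pairwise fun a b => a.mtch ∩ b.mtch = ∅)
    (deployedAt : F → Set (FwRule P))
    (hchar : ∀ (f : F) (r' : FwRule P), r' ∈ deployedAt f ↔
        ∃ r ∈ R, ∃ z1 z2 : Z, r' = restrictRule src dst r z1 z2 ∧
          ((r.dec = true ∧ f ∈ MR z1 z2) ∨
           (r.dec = false ∧ (MR z1 z2).head? = some f))) :
    ∀ (pkt : P) (z1 z2 : Z) (f : F), src pkt = z1 → dst pkt = z2 →
      f ∈ MR z1 z2 →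
      (∃ r' ∈ deployedAt f, r'.dec = false ∧ pkt ∈ r'.mtch) →
      (MR z1 z2).head? = some f ∧
        ∀ (l1 l2 : List F), MR z1 z2 = l1 ++ f :: l2 → ∀ g ∈ l2,
          ¬ ∃ r'' ∈ deployedAt g, r''.dec = true ∧ pkt ∈ r''.mtch := by
  intro pkt z1 z2 f hs hd hf ⟨r', hr'mem, hr'dec, hr'pkt⟩
  obtain ⟨r, hrR, za, zb, hre, hcase⟩ := (hchar f r').mp hr'mem
  subst hre
  simp only [restrictRule, Set.mem_inter_iff, Set.mem_setOf_eq] at hr'pkt hr'dec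
  obtain ⟨hpr, hza, hzb⟩ := hr'pkt
  have hza' : za = z1 := by rw [← hza, hs]
  have hzb' : zb = z2 := by rw [← hzb, hd]
  subst hza'; subst hzb'
  rcases hcase with ⟨h1, _⟩ | ⟨h1, h2⟩
  · rw [h1] at hr'dec; exact absurd hr'dec (by simp)
  · refine ⟨h2, ?_⟩
    intro l1 l2 heq g hg ⟨r'', hr''mem, hr''dec, hr''pkt⟩
    obtain ⟨r2, hr2R, zc, zd, hre2, hcase2⟩ := (hchar g r'').mp hr''mem
    subst hre2
    simp only [restrictRule, Set.mem_inter_iff, Set.mem_setOf_eq] at hr''pkt hr''dec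
    obtain ⟨hpr2, hzc, hzd⟩ := hr''pkt
    have hzc' : zc = za := by rw [← hzc, hs]
    have hzd' : zd = zb := by rw [← hzd, hd]
    subst hzc'; subst hzd'
    have hne : r ≠ r2 := by
      intro h; rw [h, hr''dec] at h1; exact absurd h1 (by simp)
    have hsymm : Symmetric (fun a b : FwRule P => a.mtch ∩ b.mtch = ∅) := by
      intro a b h; rwa [Set.inter_comm]
    haveI : Std.Symm (fun a b : FwRule P => a.mtch ∩ b.mtch = ∅) := ⟨fun a b h => hsymm h⟩
    have := hdisj.forall hrR hr2R hne
    have : pkt ∈ r.mtch ∩ r2.mtch := ⟨hpr, hpr2⟩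
    rw [hdisj.forall hrR hr2R hne] at this
    exact this
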